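/- Let d ≥ 1 and let A₁, A₂, A₃, A₄ ∈ M_d(ℂ) satisfy ∑_{k=1}^4 A_k* A_k = I_d and ∑_{k=1}^4 A_k A_k* = I_d. Define U = ∑_{j,k=1}^{4} (A_j* A_k) ⊗ (2|e_j⟩⟨e_k| − δ_{jk} I₄) ∈ M_d(ℂ) ⊗ M₄(ℂ). Then U is unitary, and for every ρ ∈ M_d(ℂ), (I ⊗ Tr)(U*(ρ ⊗ (1/4)I₄)U) = ∑_{j,k=1}^4 A_j* A_k ρ A_k* A_j. Consequently, if Φ(ρ) = ∑_{k=1}^4 A_k* ρ A_k is a UCPT map with Choi rank at most 4, then Φ ∘ Φ* has an exact factorization through M_d(ℂ) ⊗ M₄(ℂ). -/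

import Mathlib

open Matrix
open scoped Kronecker

noncomputable section

/-- `Φ(ρ) = ∑_{k=1}^4 A_k* ρ A_k`. -/
def PhiOf (d : ℕ) (A : Fin 4 → Matrix (Fin d) (Fin d) ℂ)
    (ρ : Matrix (Fin d) (Fin d) ℂ) : Matrix (Fin d) (Fin d) ℂ :=
  ∑ k : Fin 4, (A k)ᴴ * ρ * A k

/-- The adjoint map `Φ*(ρ) = ∑_{k=1}^4 A_k ρ A_k*`. -/
def PhiStarOf (d : ℕ) (A : Fin 4 → Matrix (Fin d) (Fin d) ℂ)
    (ρ : Matrix (Fin d) (Fin d) ℂ) : Matrix (Fin d) (Fin d) ℂ :=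
  ∑ k : Fin 4, A k * ρ * (A k)ᴴ

/-- `U = ∑_{j,k=1}^4 (A_j* A_k) ⊗ (2|e_j⟩⟨e_k| − δ_{jk} I₄)`. -/
def Ufact (d : ℕ) (A : Fin 4 → Matrix (Fin d) (Fin d) ℂ) :
    Matrix (Fin d × Fin 4) (Fin d × Fin 4) ℂ :=
  ∑ j : Fin 4, ∑ k : Fin 4,
    ((A j)ᴴ * A k) ⊗ₖ
      ((2 : ℂ) • Matrix.single j k (1 : ℂ) -
        (if j = k then (1 : Matrix (Fin 4) (Fin 4) ℂ) else 0))

namespace UfactAux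

variable {d : ℕ}

lemma sum_kron {ι : Type*} (s : Finset ι) (X : ι → Matrix (Fin d) (Fin d) ℂ)
    (Y : Matrix (Fin 4) (Fin 4) ℂ) :
    (∑ i ∈ s, X i) ⊗ₖ Y = ∑ i ∈ s, (X i) ⊗ₖ Y := by
  ext ⟨a, p⟩ ⟨b, q⟩
  simp [kronecker_apply, Matrix.sum_apply, Finset.sum_mul]

def Bmat (d : ℕ) (A : Fin 4 → Matrix (Fin d) (Fin d) ℂ) :
    Matrix (Fin d × Fin 4) (Fin d × Fin 4) ℂ :=
  ∑ j : Fin 4, ∑ k : Fin 4, ((A j)ᴴ * A k) ⊗ₖ Matrix.single j k (1 : ℂ)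

variable (A : Fin 4 → Matrix (Fin d) (Fin d) ℂ)

lemma Bmat_apply (a b : Fin d) (p q : Fin 4) :
    Bmat d A (a, p) (b, q) = ((A p)ᴴ * A q) a b := by
  unfold Bmat
  simp only [Matrix.sum_apply, kronecker_apply, Matrix.single, Matrix.of_apply,
    mul_ite, mul_one, mul_zero, ite_and]
  simp [Finset.sum_ite_irrel, Finset.sum_ite_eq', Finset.sum_const_zero]

lemma Ufact_eq (h1 : ∑ k : Fin 4, (A k)ᴴ * A k = 1) :
    Ufact d A = (2 : ℂ) • Bmat d A - 1 := by
  have key : ∀ j k : Fin 4,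
      ((A j)ᴴ * A k) ⊗ₖ
        ((2 : ℂ) • Matrix.single j k (1 : ℂ) -
          (if j = k then (1 : Matrix (Fin 4) (Fin 4) ℂ) else 0)) =
      (2 : ℂ) • (((A j)ᴴ * A k) ⊗ₖ Matrix.single j k (1 : ℂ)) -
        (if j = k then ((A j)ᴴ * A k) ⊗ₖ (1 : Matrix (Fin 4) (Fin 4) ℂ) else 0) := by
    intro j k
    ext ⟨a, p⟩ ⟨b, q⟩
    by_cases h : j = k <;>
      simp [h, kronecker_apply, Matrix.single, mul_sub, mul_ite, Matrix.one_apply,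
        mul_comm]
  have hsum : (∑ j : Fin 4, ∑ k : Fin 4,
      (if j = k then ((A j)ᴴ * A k) ⊗ₖ (1 : Matrix (Fin 4) (Fin 4) ℂ) else 0)) = 1 := by
    have e1 : ∀ j : Fin 4, (∑ k : Fin 4,
        (if j = k then ((A j)ᴴ * A k) ⊗ₖ (1 : Matrix (Fin 4) (Fin 4) ℂ) else 0)) =
        ((A j)ᴴ * A j) ⊗ₖ (1 : Matrix (Fin 4) (Fin 4) ℂ) := by
      intro j; simp
    simp only [e1]
    rw [← sum_kron, h1, one_kronecker_one]
  unfold Ufact Bmat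
  simp only [key, Finset.sum_sub_distrib, hsum, Finset.smul_sum]

lemma Bmat_conjT : (Bmat d A)ᴴ = Bmat d A := by
  ext ⟨a, p⟩ ⟨b, q⟩
  rw [conjTranspose_apply, Bmat_apply, Bmat_apply, ← conjTranspose_apply, conjTranspose_mul,
    conjTranspose_conjTranspose]

lemma Bmat_idem (h2 : ∑ k : Fin 4, A k * (A k)ᴴ = 1) :
    Bmat d A * Bmat d A = Bmat d A := by
  have key : ∀ p q : Fin 4,
      (∑ r : Fin 4, ((A p)ᴴ * A r) * ((A r)ᴴ * A q)) = (A p)ᴴ * A q := by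
    intro p q
    have e : ∀ r : Fin 4, ((A p)ᴴ * A r) * ((A r)ᴴ * A q) = (A p)ᴴ * (A r * (A r)ᴴ) * A q := by
      intro r; noncomm_ring
    simp only [e]
    calc (∑ r : Fin 4, (A p)ᴴ * (A r * (A r)ᴴ) * A q)
        = (A p)ᴴ * (∑ r : Fin 4, A r * (A r)ᴴ) * A q := by
          rw [Finset.mul_sum, Finset.sum_mul]
      _ = (A p)ᴴ * A q := by rw [h2, mul_one]
  ext ⟨a, p⟩ ⟨b, q⟩
  rw [Matrix.mul_apply, Bmat_apply, Fintype.sum_prod_type]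
  simp only [Bmat_apply]
  rw [Finset.sum_comm]
  calc (∑ r : Fin 4, ∑ c : Fin d, ((A p)ᴴ * A r) a c * ((A r)ᴴ * A q) c b)
      = ∑ r : Fin 4, (((A p)ᴴ * A r) * ((A r)ᴴ * A q)) a b := by
        refine Finset.sum_congr rfl fun r _ => ?_
        rw [Matrix.mul_apply]
    _ = (∑ r : Fin 4, ((A p)ᴴ * A r) * ((A r)ᴴ * A q)) a b := by
        rw [Matrix.sum_apply]
    _ = ((A p)ᴴ * A q) a b := by rw [key]

/-- the partial trace -/
def ptr (M : Matrix (Fin d × Fin 4) (Fin d × Fin 4) ℂ) : Matrix (Fin d) (Fin d) ℂ :=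
  Matrix.of fun i j => ∑ k : Fin 4, M (i, k) (j, k)

lemma ptr_add (M N : Matrix (Fin d × Fin 4) (Fin d × Fin 4) ℂ) :
    ptr (M + N) = ptr M + ptr N := by
  ext i j; simp [ptr, Finset.sum_add_distrib]

lemma ptr_sub (M N : Matrix (Fin d × Fin 4) (Fin d × Fin 4) ℂ) :
    ptr (M - N) = ptr M - ptr N := by
  ext i j; simp [ptr, Finset.sum_sub_distrib]

end UfactAux

open UfactAux in
/-- If `∑ A_k* A_k = I = ∑ A_k A_k*`, then `U` is unitary,
`(I ⊗ Tr)(U*(ρ ⊗ (1/4)I₄)U) = ∑_{j,k} A_j* A_k ρ A_k* A_j` for all `ρ`; consequently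
`Φ ∘ Φ*` (a UCPT map with Choi rank at most 4) has an exact factorization through
`M_d(ℂ) ⊗ M₄(ℂ)`. -/
theorem Ufact_unitary_and_factorization (d : ℕ) (hd : 1 ≤ d)
    (A : Fin 4 → Matrix (Fin d) (Fin d) ℂ)
    (h1 : ∑ k : Fin 4, (A k)ᴴ * A k = 1) (h2 : ∑ k : Fin 4, A k * (A k)ᴴ = 1) :
    Ufact d A ∈ Matrix.unitaryGroup (Fin d × Fin 4) ℂ ∧
    (∀ ρ : Matrix (Fin d) (Fin d) ℂ, ∀ i j : Fin d,
      (∑ k : Fin 4,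
        ((Ufact d A)ᴴ * (ρ ⊗ₖ (((1 : ℂ) / 4) • (1 : Matrix (Fin 4) (Fin 4) ℂ))) *
          Ufact d A) (i, k) (j, k)) =
      (∑ j' : Fin 4, ∑ k' : Fin 4, (A j')ᴴ * A k' * ρ * (A k')ᴴ * A j') i j) ∧
    (∃ U : Matrix (Fin d × Fin 4) (Fin d × Fin 4) ℂ,
      U ∈ Matrix.unitaryGroup (Fin d × Fin 4) ℂ ∧
      ∀ ρ : Matrix (Fin d) (Fin d) ℂ, ∀ i j : Fin d,
        PhiOf d A (PhiStarOf d A ρ) i j =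
          ∑ k : Fin 4,
            (Uᴴ * (ρ ⊗ₖ (((1 : ℂ) / 4) • (1 : Matrix (Fin 4) (Fin 4) ℂ))) * U)
              (i, k) (j, k)) := by
  set B := Bmat d A with hB
  have hUeq : Ufact d A = (2 : ℂ) • B - 1 := Ufact_eq A h1
  have hBH : Bᴴ = B := Bmat_conjT A
  have hBB : B * B = B := Bmat_idem A h2
  have hUH : (Ufact d A)ᴴ = Ufact d A := by
    rw [hUeq]
    rw [Matrix.conjTranspose_sub, Matrix.conjTranspose_smul, hBH, Matrix.conjTranspose_one]
    norm_num
  have hUU : Ufact d A * Ufact d A = 1 := by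
    rw [hUeq]
    have e : ((2 : ℂ) • B - 1) * ((2 : ℂ) • B - 1) =
        (B * B + B * B + B * B + B * B) - (B + B) - (B + B) + 1 := by
      rw [two_smul]; noncomm_ring
    rw [e, hBB]
    abel
  have hUnit : Ufact d A ∈ Matrix.unitaryGroup (Fin d × Fin 4) ℂ := by
    constructor
    · rw [Matrix.star_eq_conjTranspose, hUH]; exact hUU
    · rw [Matrix.star_eq_conjTranspose, hUH]; exact hUU
  have h1e : ∀ (i c : Fin d), (∑ k : Fin 4, ((A k)ᴴ * A k) i c) =
      (1 : Matrix (Fin d) (Fin d) ℂ) i c := by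
    intro i c
    rw [← Matrix.sum_apply]
    rw [h1]
  -- partial trace computation
  have main : ∀ ρ : Matrix (Fin d) (Fin d) ℂ,
      ptr ((Ufact d A)ᴴ * (ρ ⊗ₖ (((1 : ℂ) / 4) • (1 : Matrix (Fin 4) (Fin 4) ℂ))) *
        Ufact d A) =
      ∑ j' : Fin 4, ∑ k' : Fin 4, (A j')ᴴ * A k' * ρ * (A k')ᴴ * A j' := by
    intro ρ
    set M := ρ ⊗ₖ (((1 : ℂ) / 4) • (1 : Matrix (Fin 4) (Fin 4) ℂ)) with hM
    have Mapp : ∀ (c e : Fin d) (r s : Fin 4),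
        M (c, r) (e, s) = ((1 : ℂ) / 4) * (if r = s then ρ c e else 0) := by
      intro c e r s
      by_cases h : r = s <;>
        · simp [hM, kronecker_apply, Matrix.smul_apply, Matrix.one_apply, h]
          try ring
    -- entry formula for B * M
    have hBMapp : ∀ (a b : Fin d) (p q : Fin 4),
        (B * M) (a, p) (b, q) = ((1 : ℂ) / 4) * (((A p)ᴴ * A q * ρ) a b) := by
      intro a b p q
      rw [Matrix.mul_apply, Fintype.sum_prod_type]
      simp only [hB, Bmat_apply, Mapp, mul_ite, mul_zero, Finset.sum_ite_eq',
        Finset.mem_univ, if_true]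
      rw [Matrix.mul_apply, Finset.mul_sum]
      refine Finset.sum_congr rfl fun c _ => ?_
      ring
    have hMBapp : ∀ (a b : Fin d) (p q : Fin 4),
        (M * B) (a, p) (b, q) = ((1 : ℂ) / 4) * ((ρ * ((A p)ᴴ * A q)) a b) := by
      intro a b p q
      rw [Matrix.mul_apply, Fintype.sum_prod_type]
      have e : ∀ (c : Fin d) (r : Fin 4),
          M (a, p) (c, r) * B (c, r) (b, q) =
          if p = r then ((1 : ℂ) / 4) * (ρ a c * (((A r)ᴴ * A q) c b)) else 0 := by
        intro c r
        rw [Mapp, hB, Bmat_apply]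
        by_cases h : p = r <;> simp [h] <;> ring
      simp only [e, Finset.sum_ite_eq, Finset.mem_univ, if_true]
      rw [Matrix.mul_apply, Finset.mul_sum]
    have hptrBM : ptr (B * M) = ((1 : ℂ) / 4) • ρ := by
      ext i j
      simp only [ptr, Matrix.of_apply, hBMapp, Matrix.smul_apply, smul_eq_mul]
      rw [← Finset.mul_sum]
      congr 1
      calc (∑ k : Fin 4, ((A k)ᴴ * A k * ρ) i j)
          = ∑ k : Fin 4, ∑ c : Fin d, ((A k)ᴴ * A k) i c * ρ c j := by
            refine Finset.sum_congr rfl fun k _ => Matrix.mul_apply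
        _ = ∑ c : Fin d, (∑ k : Fin 4, ((A k)ᴴ * A k) i c) * ρ c j := by
            rw [Finset.sum_comm]
            exact Finset.sum_congr rfl fun c _ => (Finset.sum_mul _ _ _).symm
        _ = ∑ c : Fin d, (1 : Matrix (Fin d) (Fin d) ℂ) i c * ρ c j := by
            simp only [h1e]
        _ = ρ i j := by simp [Matrix.one_apply, ite_mul, Finset.sum_ite_eq]
    have hptrMB : ptr (M * B) = ((1 : ℂ) / 4) • ρ := by
      ext i j
      simp only [ptr, Matrix.of_apply, hMBapp, Matrix.smul_apply, smul_eq_mul]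
      rw [← Finset.mul_sum]
      congr 1
      calc (∑ k : Fin 4, (ρ * ((A k)ᴴ * A k)) i j)
          = ∑ k : Fin 4, ∑ c : Fin d, ρ i c * ((A k)ᴴ * A k) c j := by
            refine Finset.sum_congr rfl fun k _ => Matrix.mul_apply
        _ = ∑ c : Fin d, ρ i c * ∑ k : Fin 4, ((A k)ᴴ * A k) c j := by
            rw [Finset.sum_comm]
            exact Finset.sum_congr rfl fun c _ => (Finset.mul_sum _ _ _).symm
        _ = ∑ c : Fin d, ρ i c * (1 : Matrix (Fin d) (Fin d) ℂ) c j := by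
            simp only [h1e]
        _ = ρ i j := by simp [Matrix.one_apply, mul_ite, Finset.sum_ite_eq']
    have hptrM : ptr M = ρ := by
      ext i j
      simp only [ptr, Matrix.of_apply, Mapp]
      simp
    have hBMB : ptr (B * M * B) =
        ((1 : ℂ) / 4) • ∑ p : Fin 4, ∑ q : Fin 4,
          ((A p)ᴴ * A q * ρ) * ((A q)ᴴ * A p) := by
      ext i j
      simp only [ptr, Matrix.of_apply]
      have e : ∀ k : Fin 4, (B * M * B) (i, k) (j, k) =
          ((1 : ℂ) / 4) * ∑ q : Fin 4, (((A k)ᴴ * A q * ρ) * ((A q)ᴴ * A k)) i j := by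
        intro k
        rw [Matrix.mul_apply, Fintype.sum_prod_type]
        simp only [hBMapp]
        simp only [hB, Bmat_apply]
        rw [Finset.sum_comm, Finset.mul_sum]
        refine Finset.sum_congr rfl fun q _ => ?_
        rw [Matrix.mul_apply, Finset.mul_sum]
        refine Finset.sum_congr rfl fun c _ => ?_
        ring
      simp only [e]
      rw [← Finset.mul_sum]
      rw [Matrix.smul_apply, Matrix.sum_apply, smul_eq_mul]
      congr 1
    have hexp : (Ufact d A)ᴴ * M * Ufact d A =
        (B * M * B + B * M * B + B * M * B + B * M * B) - (B * M + B * M) -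
          (M * B + M * B) + M := by
      rw [hUH, hUeq, two_smul]
      noncomm_ring
    rw [hexp]
    rw [ptr_add, ptr_sub, ptr_sub]
    rw [ptr_add, ptr_add, ptr_add, ptr_add, ptr_add]
    rw [hBMB, hptrBM, hptrMB, hptrM]
    have assoc : ∀ p q : Fin 4,
        ((A p)ᴴ * A q * ρ) * ((A q)ᴴ * A p) = (A p)ᴴ * A q * ρ * (A q)ᴴ * A p := by
      intro p q; noncomm_ring
    simp only [assoc]
    module
  refine ⟨hUnit, ?_, ?_⟩
  · intro ρ i j
    have := congrFun (congrFun (main ρ) i) j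
    simpa [ptr] using this
  · refine ⟨Ufact d A, hUnit, ?_⟩
    intro ρ i j
    have := congrFun (congrFun (main ρ) i) j
    simp only [ptr, Matrix.of_apply] at this
    rw [this]
    have hphi : PhiOf d A (PhiStarOf d A ρ) =
        ∑ j' : Fin 4, ∑ k' : Fin 4, (A j')ᴴ * A k' * ρ * (A k')ᴴ * A j' := by
      unfold PhiOf PhiStarOf
      refine Finset.sum_congr rfl fun j' _ => ?_
      rw [Finset.mul_sum, Finset.sum_mul]
      refine Finset.sum_congr rfl fun k' _ => ?_
      noncomm_ring
    rw [hphi]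

end
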